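/- arXiv:2401.16525 — 5 statements merged into one kernel-verified Lean document; each statement's English description precedes it below -/
import Mathlib

section
/- Let U be a unitary operator whose eigenvalues all lie on the unit circle. If the convex hull of the eigenvalues of U contains the origin, then there exist two eigenvalues e^{iφ_0}, e^{iφ_1} of U such that |e^{i(φ_0 − φ_1)} − 1| ≥ √3. -/
open scoped Matrix.Norms.L2Operator

/-- If the convex hull of the (unit-circle) eigenvalues of a unitary `U` contains the origin,
then there are two eigenvalues `a = e^{iφ₀}`, `b = e^{iφ₁}` with `|e^{i(φ₀−φ₁)} − 1| ≥ √3`. -/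
theorem stmt_2 (n : ℕ) (U : Matrix (Fin n) (Fin n) ℂ)
    (hU : U ∈ Matrix.unitaryGroup (Fin n) ℂ)
    (h0 : (0 : ℂ) ∈ convexHull ℝ (spectrum ℂ U)) :
    ∃ a ∈ spectrum ℂ U, ∃ b ∈ spectrum ℂ U,
      Real.sqrt 3 ≤ ‖a * (starRingEnd ℂ) b - 1‖ := by
  by_contra hc
  push_neg at hc
  -- eigenvalues have norm 1
  have hnorm : ∀ a ∈ spectrum ℂ U, ‖a‖ = 1 := by
    intro a ha
    have := spectrum.subset_circle_of_unitary hU ha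
    simpa [Metric.mem_sphere, Complex.dist_eq] using this
  -- pairwise real parts of a * conj b are > -1/2
  have hre : ∀ a ∈ spectrum ℂ U, ∀ b ∈ spectrum ℂ U,
      -(1/2 : ℝ) < (a * (starRingEnd ℂ) b).re := by
    intro a ha b hb
    have h1 : ‖a * (starRingEnd ℂ) b - 1‖ < Real.sqrt 3 := hc a ha b hb
    have h2 : ‖a * (starRingEnd ℂ) b - 1‖ ^ 2 < 3 := by
      have := (Real.lt_sqrt (norm_nonneg _)).mp h1
      linarith
    have hna : ‖a‖ = 1 := hnorm a ha
    have hnb : ‖b‖ = 1 := hnorm b hb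
    have hnsa : Complex.normSq a = 1 := by
      rw [Complex.normSq_eq_norm_sq, hna]; norm_num
    have hnsb : Complex.normSq b = 1 := by
      rw [Complex.normSq_eq_norm_sq, hnb]; norm_num
    have hsq : ‖a * (starRingEnd ℂ) b - 1‖ ^ 2
        = Complex.normSq (a * (starRingEnd ℂ) b - 1) := by
      rw [Complex.sq_norm]
    rw [hsq] at h2
    have hra : Complex.normSq a * Complex.normSq b = 1 := by rw [hnsa, hnsb]; ring
    simp only [Complex.normSq_apply, Complex.sub_re, Complex.sub_im, Complex.one_re,
      Complex.one_im, Complex.mul_re, Complex.mul_im] at h2 hra ⊢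
    simp only [Complex.conj_re, Complex.conj_im] at h2 ⊢
    nlinarith [h2, hra]
  -- Carathéodory
  rw [convexHull_eq_union] at h0
  simp only [Set.mem_iUnion] at h0
  obtain ⟨t, hts, hai, ht0⟩ := h0
  -- t is nonempty
  have htne : t.Nonempty := by
    rcases t.eq_empty_or_nonempty with rfl | h
    · simp [convexHull_empty] at ht0
    · exact h
  -- card ≤ 3
  have hcard : t.card ≤ 3 := by
    have h1 := hai.card_le_finrank_succ
    have h2 : Module.finrank ℝ (vectorSpan ℝ (Set.range ((↑) : t → ℂ))) ≤
        Module.finrank ℝ ℂ := Submodule.finrank_le _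
    rw [Complex.finrank_real_complex] at h2
    simpa [Fintype.card_coe] using h1.trans (by omega)
  -- weights
  rw [Finset.convexHull_eq] at ht0
  obtain ⟨w, hw0, hw1, hwc⟩ := ht0
  rw [Finset.centerMass_eq_of_sum_1 _ _ hw1] at hwc
  simp only [id] at hwc
  -- complex sum is zero
  have hsum : ∑ y ∈ t, (w y : ℂ) * y = 0 := by
    rw [← hwc]
    exact Finset.sum_congr rfl fun y _ => by rw [Complex.real_smul]
  -- the double sum of real parts is zero
  have hzero : ∑ y ∈ t, ∑ z ∈ t, w y * w z * (y * (starRingEnd ℂ) z).re = 0 := by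
    have h1 : ((∑ y ∈ t, (w y : ℂ) * y) * (starRingEnd ℂ) (∑ z ∈ t, (w z : ℂ) * z)).re
        = 0 := by rw [hsum]; simp
    rw [map_sum, Finset.sum_mul_sum] at h1
    rw [← h1, Complex.re_sum]
    refine Finset.sum_congr rfl fun y _ => ?_
    rw [Complex.re_sum]
    refine Finset.sum_congr rfl fun z _ => ?_
    have : (w y : ℂ) * y * (starRingEnd ℂ) ((w z : ℂ) * z)
        = ((w y * w z : ℝ) : ℂ) * (y * (starRingEnd ℂ) z) := by
      simp only [map_mul, Complex.conj_ofReal]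
      push_cast
      ring
    rw [this, Complex.re_ofReal_mul]
  -- diagonal entries are 1
  have hdiag : ∀ y ∈ t, (y * (starRingEnd ℂ) y).re = 1 := by
    intro y hy
    rw [Complex.mul_conj]
    simp [Complex.normSq_eq_norm_sq, hnorm y (hts hy)]
  -- minimum ε over pairs
  obtain ⟨p, hp, hpmin⟩ := Finset.exists_min_image (t ×ˢ t)
    (fun p => (p.1 * (starRingEnd ℂ) p.2).re + 1/2) (htne.product htne)
  set ε : ℝ := (p.1 * (starRingEnd ℂ) p.2).re + 1/2 with hε
  have hεpos : 0 < ε := by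
    rw [Finset.mem_product] at hp
    rcases eq_or_ne p.1 p.2 with h | h
    · rw [hε, h, hdiag p.2 hp.2]; norm_num
    · have := hre p.1 (hts hp.1) p.2 (hts hp.2)
      rw [hε]; linarith
  have hεle : ε ≤ 3/2 := by
    obtain ⟨y₀, hy₀⟩ := htne
    have h := hpmin (y₀, y₀) (Finset.mem_product.mpr ⟨hy₀, hy₀⟩)
    simp only [hdiag y₀ hy₀] at h
    linarith
  have hεbound : ∀ y ∈ t, ∀ z ∈ t, ε - 1/2 ≤ (y * (starRingEnd ℂ) z).re := by
    intro y hy z hz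
    have := hpmin (y, z) (Finset.mem_product.mpr ⟨hy, hz⟩)
    simp only at this
    linarith
  set D : ℝ := ∑ y ∈ t, w y ^ 2 with hD
  -- total weight product sum is 1
  have hWW : ∑ y ∈ t, ∑ z ∈ t, w y * w z = 1 := by
    rw [← Finset.sum_mul_sum, hw1]; norm_num
  -- split double sums at diagonal
  have hsplit : ∀ (f : ℂ → ℂ → ℝ), ∑ y ∈ t, ∑ z ∈ t, f y z
      = ∑ y ∈ t, f y y + ∑ y ∈ t, ∑ z ∈ t.erase y, f y z := by
    intro f
    rw [← Finset.sum_add_distrib]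
    exact Finset.sum_congr rfl fun y hy => by
      rw [← Finset.add_sum_erase _ _ hy]
  -- off-diagonal weight sum
  have hOffW : ∑ y ∈ t, ∑ z ∈ t.erase y, w y * w z = 1 - D := by
    have := hsplit (fun y z => w y * w z)
    rw [hWW] at this
    have hdsq : ∑ y ∈ t, w y * w y = D := by
      rw [hD]; exact Finset.sum_congr rfl fun y _ => (sq (w y)).symm
    rw [hdsq] at this
    linarith
  -- main decomposition
  have hmain : 0 = D + ∑ y ∈ t, ∑ z ∈ t.erase y, w y * w z * (y * (starRingEnd ℂ) z).re := by
    have := hsplit (fun y z => w y * w z * (y * (starRingEnd ℂ) z).re)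
    rw [hzero] at this
    have hd : ∑ y ∈ t, w y * w y * (y * (starRingEnd ℂ) y).re = D := by
      rw [hD]
      exact Finset.sum_congr rfl fun y hy => by rw [hdiag y hy]; ring
    rw [hd] at this
    exact this
  -- bound the off-diagonal part
  have hOffBound : (ε - 1/2) * (1 - D)
      ≤ ∑ y ∈ t, ∑ z ∈ t.erase y, w y * w z * (y * (starRingEnd ℂ) z).re := by
    rw [← hOffW, Finset.mul_sum]
    refine Finset.sum_le_sum fun y hy => ?_
    rw [Finset.mul_sum]
    refine Finset.sum_le_sum fun z hz => ?_
    have hzt : z ∈ t := Finset.mem_of_mem_erase hz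
    have h1 : ε - 1/2 ≤ (y * (starRingEnd ℂ) z).re := hεbound y hy z hzt
    have h2 : 0 ≤ w y * w z := mul_nonneg (hw0 y hy) (hw0 z hzt)
    nlinarith
  -- Cauchy-Schwarz: 1 ≤ card * D
  have hCS : 1 ≤ (t.card : ℝ) * D := by
    have := sq_sum_le_card_mul_sum_sq (s := t) (f := w)
    rw [hw1] at this
    simpa [hD] using this
  have hD3 : 1/3 ≤ D := by
    have hc3 : (t.card : ℝ) ≤ 3 := by exact_mod_cast hcard
    have hDpos : 0 ≤ D := Finset.sum_nonneg fun y hy => sq_nonneg _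
    nlinarith
  clear_value ε D
  have key : 0 ≥ (3/2 - ε) * D + ε - 1/2 := by nlinarith [hmain, hOffBound]
  have hmul : (3/2 - ε) * (1/3) ≤ (3/2 - ε) * D :=
    mul_le_mul_of_nonneg_left hD3 (by linarith : (0:ℝ) ≤ 3/2 - ε)
  linarith
end

section
/- Suppose t lies in the convex hull of the eigenvalues of a unitary U, and real numbers γ, α satisfy δ(U) ≤ γ ≤ α·δ(U), where δ(U) = max_{a,b}|λ_a − λ_b| is the eigenvalue diameter of U. Then ‖U − I‖ ≤ γ + |t − 1| ≤ (1 + 2α)‖U − I‖. -/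
open scoped Matrix.Norms.L2Operator

/-- If `t` lies in the convex hull of the eigenvalues of a unitary `U`, and
`δ(U) ≤ γ ≤ α·δ(U)` where `δ(U)` is the eigenvalue diameter of `U`, then
`‖U − I‖ ≤ γ + |t − 1| ≤ (1 + 2α)‖U − I‖`. -/
theorem stmt_7 (n : ℕ) (hn : 0 < n) (U : Matrix (Fin n) (Fin n) ℂ)
    (hU : U ∈ Matrix.unitaryGroup (Fin n) ℂ) (t : ℂ)
    (ht : t ∈ convexHull ℝ (spectrum ℂ U)) (γ α : ℝ) (hα : 1 ≤ α)
    (hγ₁ : sSup {r : ℝ | ∃ a ∈ spectrum ℂ U, ∃ b ∈ spectrum ℂ U, r = ‖a - b‖} ≤ γ)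
    (hγ₂ : γ ≤ α * sSup {r : ℝ | ∃ a ∈ spectrum ℂ U, ∃ b ∈ spectrum ℂ U, r = ‖a - b‖}) :
    ‖U - 1‖ ≤ γ + ‖t - 1‖ ∧ γ + ‖t - 1‖ ≤ (1 + 2 * α) * ‖U - 1‖ := by
  haveI : NeZero n := ⟨hn.ne'⟩
  letI : CStarAlgebra (Matrix (Fin n) (Fin n) ℂ) := {}
  set S := spectrum ℂ U with hS
  set D := sSup {r : ℝ | ∃ a ∈ S, ∃ b ∈ S, r = ‖a - b‖} with hD
  set M := ‖U - 1‖ with hM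
  have h1 : star U * U = 1 := hU.1
  have h2 : U * star U = 1 := hU.2
  -- spectrum of U - 1
  have hspec := spectrum.sub_singleton_eq U (1 : ℂ)
  rw [map_one] at hspec
  -- spectrum nonempty
  obtain ⟨z, hz⟩ : S.Nonempty := spectrum.nonempty_of_isAlgClosed_of_finiteDimensional ℂ U
  -- every eigenvalue difference from 1 is ≤ M
  have factA : ∀ a ∈ S, ‖a - 1‖ ≤ M := by
    intro a ha
    have : a - 1 ∈ spectrum ℂ (U - 1) := by
      rw [← hspec]; exact Set.sub_mem_sub ha rfl
    exact spectrum.norm_le_norm_of_mem this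
  have hM0 : 0 ≤ M := norm_nonneg _
  -- boundedness of the gap set
  have hbdd : BddAbove {r : ℝ | ∃ a ∈ S, ∃ b ∈ S, r = ‖a - b‖} := by
    refine ⟨2 * M, ?_⟩
    rintro r ⟨a, ha, b, hb, rfl⟩
    calc ‖a - b‖ = ‖(a - 1) - (b - 1)‖ := by ring_nf
      _ ≤ ‖a - 1‖ + ‖b - 1‖ := norm_sub_le _ _
      _ ≤ M + M := add_le_add (factA a ha) (factA b hb)
      _ = 2 * M := by ring
  -- D ≤ 2M
  have hD2M : D ≤ 2 * M := by
    apply csSup_le (⟨‖z - z‖, ⟨z, hz, z, hz, rfl⟩⟩ : Set.Nonempty {r : ℝ | ∃ a ∈ S, ∃ b ∈ S, r = ‖a - b‖})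
    rintro r ⟨a, ha, b, hb, rfl⟩
    calc ‖a - b‖ = ‖(a - 1) - (b - 1)‖ := by ring_nf
      _ ≤ ‖a - 1‖ + ‖b - 1‖ := norm_sub_le _ _
      _ ≤ M + M := add_le_add (factA a ha) (factA b hb)
      _ = 2 * M := by ring
  -- t is within M of 1
  have htM : ‖t - 1‖ ≤ M := by
    have hsub : S ⊆ Metric.closedBall (1 : ℂ) M := by
      intro a ha
      simpa [Metric.mem_closedBall, dist_eq_norm] using factA a ha
    have := convexHull_min hsub (convex_closedBall _ _) ht
    simpa [Metric.mem_closedBall, dist_eq_norm] using this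
  -- t is within D of each eigenvalue
  have htD : ∀ a ∈ S, ‖t - a‖ ≤ D := by
    intro a ha
    have hsub : S ⊆ Metric.closedBall a D := by
      intro b hb
      simp only [Metric.mem_closedBall, dist_eq_norm]
      exact le_csSup hbdd ⟨b, hb, a, ha, rfl⟩
    have := convexHull_min hsub (convex_closedBall _ _) ht
    simpa [Metric.mem_closedBall, dist_eq_norm] using this
  -- normality of U - 1
  haveI : IsStarNormal (U - 1) := by
    constructor
    show star (U - 1) * (U - 1) = (U - 1) * star (U - 1)
    simp only [star_sub, star_one, sub_mul, mul_sub, mul_one, one_mul, h1, h2]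
    abel
  -- upper bound on M via spectral radius
  have factB : M ≤ D + ‖t - 1‖ := by
    have hC0 : 0 ≤ D + ‖t - 1‖ := by
      have := htD z hz
      have h0 : 0 ≤ D := le_trans (norm_nonneg _) this
      positivity
    have hrad : spectralRadius ℂ (U - 1) ≤ ENNReal.ofReal (D + ‖t - 1‖) := by
      rw [spectralRadius]
      refine iSup₂_le fun k hk => ?_
      rw [← hspec] at hk
      obtain ⟨a, ha, b, hb, rfl⟩ := Set.mem_sub.mp hk
      rw [Set.mem_singleton_iff] at hb
      subst hb
      have hk' : ‖a - 1‖ ≤ D + ‖t - 1‖ := by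
        calc ‖a - 1‖ = ‖(a - t) + (t - 1)‖ := by ring_nf
          _ ≤ ‖a - t‖ + ‖t - 1‖ := norm_add_le _ _
          _ ≤ D + ‖t - 1‖ := by
              have := htD a ha
              rw [norm_sub_rev] at this
              linarith
      rw [ENNReal.ofReal, ← norm_toNNReal]
      exact_mod_cast ENNReal.coe_le_coe.mpr (Real.toNNReal_mono hk')
    have heq := IsStarNormal.spectralRadius_eq_nnnorm (U - 1)
    rw [heq] at hrad
    rw [ENNReal.ofReal] at hrad
    have : ‖U - 1‖₊ ≤ (D + ‖t - 1‖).toNNReal := ENNReal.coe_le_coe.mp hrad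
    calc M = (‖U - 1‖₊ : ℝ) := rfl
      _ ≤ ((D + ‖t - 1‖).toNNReal : ℝ) := NNReal.coe_le_coe.mpr this
      _ = D + ‖t - 1‖ := Real.coe_toNNReal _ hC0
  constructor
  · calc M ≤ D + ‖t - 1‖ := factB
      _ ≤ γ + ‖t - 1‖ := by linarith
  · have hα0 : (0 : ℝ) < α := lt_of_lt_of_le one_pos hα
    calc γ + ‖t - 1‖ ≤ α * D + M := add_le_add hγ₂ htM
      _ ≤ α * (2 * M) + M := by nlinarith
      _ = (1 + 2 * α) * M := by ring
end

section
/- Let K_1 and K_2 be unitary operators on spaces H_1 and H_2, each with spectrum closed under complex conjugation, and set θ_p = max{φ ∈ [0,π] : e^{iφ} ∈ spec(K_p)}. If θ_1 + θ_2 < π/2, then the operator K_1 ⊗ K_2 has spectrum closed under conjugation and θ(K_1 ⊗ K_2) := max{φ ∈ [0,π] : e^{iφ} ∈ spec(K_1 ⊗ K_2)} equals θ_1 + θ_2. -/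
open scoped Kronecker

section Stmt11Aux

open Matrix Complex
open scoped ComplexOrder

variable {k : Type*} [Fintype k] [DecidableEq k]

private lemma stmt11_mem_spectrum_iff_det (M : Matrix k k ℂ) (z : ℂ) :
    z ∈ spectrum ℂ M ↔ (z • (1 : Matrix k k ℂ) - M).det = 0 := by
  rw [spectrum.mem_iff, Matrix.isUnit_iff_isUnit_det, isUnit_iff_ne_zero, not_not,
    Algebra.algebraMap_eq_smul_one]

private lemma stmt11_mem_spectrum_iff_eig (M : Matrix k k ℂ) (z : ℂ) :
    z ∈ spectrum ℂ M ↔ ∃ v, v ≠ 0 ∧ M *ᵥ v = z • v := by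
  rw [stmt11_mem_spectrum_iff_det, ← Matrix.exists_mulVec_eq_zero_iff]
  have h : ∀ v, (z • (1 : Matrix k k ℂ) - M) *ᵥ v = z • v - M *ᵥ v := by
    intro v
    rw [Matrix.sub_mulVec, Matrix.smul_mulVec, Matrix.one_mulVec]
  simp_rw [h, sub_eq_zero]
  exact ⟨fun ⟨v, hv, he⟩ => ⟨v, hv, he.symm⟩, fun ⟨v, hv, he⟩ => ⟨v, hv, he.symm⟩⟩

private lemma stmt11_abs_eq_one_of_unitary {M : Matrix k k ℂ}
    (hM : M ∈ Matrix.unitaryGroup k ℂ) {z : ℂ} (hz : z ∈ spectrum ℂ M) :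
    ‖z‖ = 1 := by
  obtain ⟨v, hv, hMv⟩ := (stmt11_mem_spectrum_iff_eig M z).mp hz
  have hstar : star M * M = 1 := hM.1
  have key : star (M *ᵥ v) ⬝ᵥ (M *ᵥ v) = star v ⬝ᵥ v := by
    rw [Matrix.star_mulVec, Matrix.dotProduct_mulVec, Matrix.vecMul_vecMul,
      ← Matrix.star_eq_conjTranspose, hstar, Matrix.vecMul_one]
  rw [hMv] at key
  have key2 : (starRingEnd ℂ z * z) * (star v ⬝ᵥ v) = star v ⬝ᵥ v := by
    conv_rhs => rw [← key]
    rw [star_smul, smul_dotProduct, dotProduct_smul, smul_eq_mul, smul_eq_mul,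
      ← mul_assoc]
    rfl
  have hs : star v ⬝ᵥ v ≠ 0 := fun h => hv (dotProduct_star_self_eq_zero.mp h)
  have h1 : starRingEnd ℂ z * z = 1 := by
    have := mul_right_cancel₀ hs (by rw [key2, one_mul] : (starRingEnd ℂ z * z) * (star v ⬝ᵥ v) = 1 * (star v ⬝ᵥ v))
    exact this
  have : (Complex.normSq z : ℂ) = 1 := by
    rw [← Complex.mul_conj z, mul_comm]; exact h1
  have hnsq : Complex.normSq z = 1 := by exact_mod_cast this
  rw [Complex.norm_def, hnsq, Real.sqrt_one]

private lemma stmt11_sub_kronecker {l l' : Type*} [Fintype l] [Fintype l'] [DecidableEq l]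
    [DecidableEq l'] (A B : Matrix l l ℂ) (C : Matrix l' l' ℂ) :
    (A - B) ⊗ₖ C = A ⊗ₖ C - B ⊗ₖ C := by
  ext ⟨i₁, i₂⟩ ⟨j₁, j₂⟩
  simp [Matrix.kronecker_apply, sub_mul]

private lemma stmt11_kronecker_sub {l l' : Type*} [Fintype l] [Fintype l'] [DecidableEq l]
    [DecidableEq l'] (A : Matrix l l ℂ) (B C : Matrix l' l' ℂ) :
    A ⊗ₖ (B - C) = A ⊗ₖ B - A ⊗ₖ C := by
  ext ⟨i₁, i₂⟩ ⟨j₁, j₂⟩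
  simp [Matrix.kronecker_apply, mul_sub]

set_option maxHeartbeats 1000000 in
private lemma stmt11_spectrum_kronecker {n m : ℕ} (hn : 0 < n) (hm : 0 < m)
    (K₁ : Matrix (Fin n) (Fin n) ℂ) (K₂ : Matrix (Fin m) (Fin m) ℂ)
    (h₂ : IsUnit K₂.det) :
    spectrum ℂ (K₁ ⊗ₖ K₂) = {z | ∃ a ∈ spectrum ℂ K₁, ∃ b ∈ spectrum ℂ K₂, z = a * b} := by
  have hspecP : ∀ c : ℂ, c ∈ spectrum ℂ (K₁ ⊗ₖ (1 : Matrix (Fin m) (Fin m) ℂ)) →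
      c ∈ spectrum ℂ K₁ := by
    intro c hc
    rw [stmt11_mem_spectrum_iff_det] at hc ⊢
    have he : c • (1 : Matrix (Fin n × Fin m) (Fin n × Fin m) ℂ) -
        K₁ ⊗ₖ (1 : Matrix (Fin m) (Fin m) ℂ) =
        (c • (1 : Matrix (Fin n) (Fin n) ℂ) - K₁) ⊗ₖ (1 : Matrix (Fin m) (Fin m) ℂ) := by
      rw [stmt11_sub_kronecker, Matrix.smul_kronecker, Matrix.one_kronecker_one]
    rw [he, Matrix.det_kronecker, Matrix.det_one, one_pow, mul_one, Fintype.card_fin] at hc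
    exact (pow_eq_zero_iff hm.ne').mp hc
  have hspecQ : ∀ c : ℂ, c ∈ spectrum ℂ ((1 : Matrix (Fin n) (Fin n) ℂ) ⊗ₖ K₂) →
      c ∈ spectrum ℂ K₂ := by
    intro c hc
    rw [stmt11_mem_spectrum_iff_det] at hc ⊢
    have he : c • (1 : Matrix (Fin n × Fin m) (Fin n × Fin m) ℂ) -
        (1 : Matrix (Fin n) (Fin n) ℂ) ⊗ₖ K₂ =
        (1 : Matrix (Fin n) (Fin n) ℂ) ⊗ₖ (c • (1 : Matrix (Fin m) (Fin m) ℂ) - K₂) := by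
      rw [stmt11_kronecker_sub, Matrix.kronecker_smul, Matrix.one_kronecker_one]
    rw [he, Matrix.det_kronecker, Matrix.det_one, one_pow, one_mul, Fintype.card_fin] at hc
    exact (pow_eq_zero_iff hn.ne').mp hc
  apply Set.eq_of_subset_of_subset
  · -- hard direction
    intro z hz
    obtain ⟨v, hv, hMv⟩ := (stmt11_mem_spectrum_iff_eig _ z).mp hz
    set N : Matrix (Fin n × Fin m) (Fin n × Fin m) ℂ := K₁ ⊗ₖ K₂ with hN
    set P : Matrix (Fin n × Fin m) (Fin n × Fin m) ℂ :=
      K₁ ⊗ₖ (1 : Matrix (Fin m) (Fin m) ℂ) with hP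
    set Q : Matrix (Fin n × Fin m) (Fin n × Fin m) ℂ :=
      (1 : Matrix (Fin n) (Fin n) ℂ) ⊗ₖ K₂ with hQ
    have hPQ : P * Q = N := by
      rw [hP, hQ, hN, ← Matrix.mul_kronecker_mul, Matrix.mul_one, Matrix.one_mul]
    have hcomm : (z • (1 : Matrix (Fin n × Fin m) (Fin n × Fin m) ℂ) - N) * Q =
        Q * (z • (1 : Matrix (Fin n × Fin m) (Fin n × Fin m) ℂ) - N) := by
      have h1 : N * Q = Q * N := by
        rw [hN, hQ, ← Matrix.mul_kronecker_mul, ← Matrix.mul_kronecker_mul,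
          Matrix.mul_one, Matrix.one_mul]
      rw [sub_mul, mul_sub, smul_mul_assoc, mul_smul_comm, one_mul, mul_one, h1]
    set E := LinearMap.ker
      (Matrix.mulVecLin (z • (1 : Matrix (Fin n × Fin m) (Fin n × Fin m) ℂ) - N)) with hE
    have hmemE : ∀ x, x ∈ E ↔ (z • (1 : Matrix (Fin n × Fin m) (Fin n × Fin m) ℂ) - N) *ᵥ x
        = 0 := by
      intro x
      rw [hE, LinearMap.mem_ker, Matrix.mulVecLin_apply]
    have hQE : ∀ x ∈ E, Matrix.mulVecLin Q x ∈ E := by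
      intro x hx
      rw [hmemE] at hx ⊢
      rw [Matrix.mulVecLin_apply, Matrix.mulVec_mulVec, hcomm, ← Matrix.mulVec_mulVec, hx,
        Matrix.mulVec_zero]
    have hvE : v ∈ E := by
      rw [hmemE, Matrix.sub_mulVec, Matrix.smul_mulVec, Matrix.one_mulVec, hMv, sub_self]
    haveI : Nontrivial E := nontrivial_of_ne ⟨v, hvE⟩ 0 (by rw [Ne, Submodule.mk_eq_zero]; exact hv)
    obtain ⟨μ, hμ⟩ := Module.End.exists_eigenvalue ((Matrix.mulVecLin Q).restrict hQE)
    obtain ⟨w, hw⟩ := hμ.exists_hasEigenvector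
    have hw0 : (w : Fin n × Fin m → ℂ) ≠ 0 := fun h => hw.right (Subtype.ext h)
    have hQw : Q *ᵥ (w : Fin n × Fin m → ℂ) = μ • (w : Fin n × Fin m → ℂ) :=
      congrArg Subtype.val hw.apply_eq_smul
    have hNw : N *ᵥ (w : Fin n × Fin m → ℂ) = z • (w : Fin n × Fin m → ℂ) := by
      have := (hmemE _).mp w.2
      rw [Matrix.sub_mulVec, Matrix.smul_mulVec, Matrix.one_mulVec, sub_eq_zero] at this
      exact this.symm
    have hμ0 : μ ≠ 0 := by
      intro h
      rw [h, zero_smul] at hQw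
      have hdet : Q.det = 0 := Matrix.exists_mulVec_eq_zero_iff.mp ⟨w, hw0, hQw⟩
      rw [hQ, Matrix.det_kronecker, Matrix.det_one, one_pow, one_mul, Fintype.card_fin] at hdet
      exact (h₂.ne_zero) ((pow_eq_zero_iff hn.ne').mp hdet)
    have hPw : P *ᵥ (w : Fin n × Fin m → ℂ) = (μ⁻¹ * z) • (w : Fin n × Fin m → ℂ) := by
      have h1 : μ • (P *ᵥ (w : Fin n × Fin m → ℂ)) = z • (w : Fin n × Fin m → ℂ) := by
        rw [← Matrix.mulVec_smul, ← hQw, Matrix.mulVec_mulVec, hPQ, hNw]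
      refine smul_right_injective _ hμ0 ?_
      show μ • (P *ᵥ (w : Fin n × Fin m → ℂ)) = μ • ((μ⁻¹ * z) • (w : Fin n × Fin m → ℂ))
      rw [h1, smul_smul, ← mul_assoc, mul_inv_cancel₀ hμ0, one_mul]
    refine ⟨μ⁻¹ * z, hspecP _ ((stmt11_mem_spectrum_iff_eig _ _).mpr ⟨w, hw0, hPw⟩),
      μ, hspecQ _ ((stmt11_mem_spectrum_iff_eig _ _).mpr ⟨w, hw0, hQw⟩), ?_⟩
    rw [mul_comm μ⁻¹ z, mul_assoc, inv_mul_cancel₀ hμ0, mul_one]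
  · -- easy direction
    rintro z ⟨a, ha, b, hb, rfl⟩
    obtain ⟨v, hv, hva⟩ := (stmt11_mem_spectrum_iff_eig _ a).mp ha
    obtain ⟨w, hw, hwb⟩ := (stmt11_mem_spectrum_iff_eig _ b).mp hb
    set u : Fin n × Fin m → ℂ := fun p => v p.1 * w p.2 with hu
    obtain ⟨i, hi⟩ := Function.ne_iff.mp hv
    obtain ⟨j, hj⟩ := Function.ne_iff.mp hw
    have hu0 : u ≠ 0 := Function.ne_iff.mpr ⟨(i, j), by
      simp only [hu, Pi.zero_apply]
      exact mul_ne_zero (by simpa using hi) (by simpa using hj)⟩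
    refine (stmt11_mem_spectrum_iff_eig _ _).mpr ⟨u, hu0, ?_⟩
    funext p
    obtain ⟨i', j'⟩ := p
    have hfac : ((K₁ ⊗ₖ K₂) *ᵥ u) (i', j') = (K₁ *ᵥ v) i' * (K₂ *ᵥ w) j' := by
      simp only [Matrix.mulVec, dotProduct, Matrix.kronecker_apply]
      rw [Fintype.sum_prod_type, Finset.sum_mul_sum]
      exact Finset.sum_congr rfl fun k _ => Finset.sum_congr rfl fun l _ => by
        simp [Matrix.kroneckerMap_apply]; ring
    rw [hfac, hva, hwb]
    simp only [Pi.smul_apply, smul_eq_mul, hu]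
    ring

private lemma stmt11_arg_bound {K : Matrix k k ℂ}
    (hK : K ∈ Matrix.unitaryGroup k ℂ)
    (hconj : ∀ z ∈ spectrum ℂ K, (starRingEnd ℂ) z ∈ spectrum ℂ K)
    {θ : ℝ}
    (hθ : IsGreatest {φ : ℝ | φ ∈ Set.Icc 0 Real.pi ∧
        Complex.exp (φ * Complex.I) ∈ spectrum ℂ K} θ)
    {z : ℂ} (hz : z ∈ spectrum ℂ K) :
    |z.arg| ≤ θ ∧ z = Complex.exp (z.arg * Complex.I) := by
  have habs : ‖z‖ = 1 := stmt11_abs_eq_one_of_unitary hK hz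
  have hzexp : z = Complex.exp (z.arg * Complex.I) := by
    conv_lhs => rw [← Complex.norm_mul_exp_arg_mul_I z]
    rw [habs, Complex.ofReal_one, one_mul]
  refine ⟨?_, hzexp⟩
  rcases le_or_gt 0 z.arg with h0 | h0
  · rw [_root_.abs_of_nonneg h0]
    exact hθ.2 ⟨⟨h0, Complex.arg_le_pi z⟩, by rw [← hzexp]; exact hz⟩
  · rw [_root_.abs_of_neg h0]
    have hπ := Real.pi_pos
    have hne : z.arg ≠ Real.pi := fun h => by rw [h] at h0; linarith
    have hcz := hconj z hz
    have hargc : (starRingEnd ℂ z).arg = -z.arg := by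
      rw [Complex.arg_conj, if_neg hne]
    have hcze : Complex.exp ((-z.arg : ℝ) * Complex.I) = starRingEnd ℂ z := by
      conv_rhs => rw [← Complex.norm_mul_exp_arg_mul_I (starRingEnd ℂ z)]
      rw [Complex.norm_conj, habs, Complex.ofReal_one, one_mul, hargc]
    have hlt := Complex.neg_pi_lt_arg z
    exact hθ.2 ⟨⟨by linarith, by linarith⟩, by rw [hcze]; exact hcz⟩

end Stmt11Aux

/-- Additivity lemma, case (a): if `K₁, K₂` are unitaries with conjugation-closed spectra,
`θ_p = max {φ ∈ [0,π] : e^{iφ} ∈ spec(K_p)}`, and `θ₁ + θ₂ < π/2`, then the spectrum of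
`K₁ ⊗ K₂` is closed under conjugation and its maximal angle is `θ₁ + θ₂`. -/
theorem stmt_11 (n m : ℕ) (hn : 0 < n) (hm : 0 < m)
    (K₁ : Matrix (Fin n) (Fin n) ℂ) (K₂ : Matrix (Fin m) (Fin m) ℂ)
    (hK₁ : K₁ ∈ Matrix.unitaryGroup (Fin n) ℂ)
    (hK₂ : K₂ ∈ Matrix.unitaryGroup (Fin m) ℂ)
    (hconj₁ : ∀ z ∈ spectrum ℂ K₁, (starRingEnd ℂ) z ∈ spectrum ℂ K₁)
    (hconj₂ : ∀ z ∈ spectrum ℂ K₂, (starRingEnd ℂ) z ∈ spectrum ℂ K₂)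
    (θ₁ θ₂ : ℝ)
    (hθ₁ : IsGreatest {φ : ℝ | φ ∈ Set.Icc 0 Real.pi ∧
        Complex.exp (φ * Complex.I) ∈ spectrum ℂ K₁} θ₁)
    (hθ₂ : IsGreatest {φ : ℝ | φ ∈ Set.Icc 0 Real.pi ∧
        Complex.exp (φ * Complex.I) ∈ spectrum ℂ K₂} θ₂)
    (hsum : θ₁ + θ₂ < Real.pi / 2) :
    (∀ z ∈ spectrum ℂ (K₁ ⊗ₖ K₂), (starRingEnd ℂ) z ∈ spectrum ℂ (K₁ ⊗ₖ K₂)) ∧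
      IsGreatest {φ : ℝ | φ ∈ Set.Icc 0 Real.pi ∧
        Complex.exp (φ * Complex.I) ∈ spectrum ℂ (K₁ ⊗ₖ K₂)} (θ₁ + θ₂) := by
  have hπ := Real.pi_pos
  have hθ₁0 : 0 ≤ θ₁ := hθ₁.1.1.1
  have hθ₂0 : 0 ≤ θ₂ := hθ₂.1.1.1
  have hdet₂ : IsUnit K₂.det := by
    rw [← Matrix.isUnit_iff_isUnit_det]
    exact ⟨⟨K₂, star K₂, hK₂.2, hK₂.1⟩, rfl⟩
  have hspec := stmt11_spectrum_kronecker hn hm K₁ K₂ hdet₂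
  refine ⟨?_, ⟨⟨by linarith, by linarith⟩, ?_⟩, ?_⟩
  · intro z hz
    rw [hspec] at hz ⊢
    obtain ⟨a, ha, b, hb, rfl⟩ := hz
    exact ⟨_, hconj₁ a ha, _, hconj₂ b hb, map_mul _ a b⟩
  · rw [hspec]
    refine ⟨_, hθ₁.1.2, _, hθ₂.1.2, ?_⟩
    rw [← Complex.exp_add]
    congr 1
    push_cast
    ring
  · rintro φ ⟨⟨hφ0, hφπ⟩, hφspec⟩
    rw [hspec] at hφspec
    obtain ⟨a, ha, b, hb, hab⟩ := hφspec
    obtain ⟨haarg, hae⟩ := stmt11_arg_bound hK₁ hconj₁ hθ₁ ha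
    obtain ⟨hbarg, hbe⟩ := stmt11_arg_bound hK₂ hconj₂ hθ₂ hb
    have habs : |a.arg + b.arg| ≤ θ₁ + θ₂ := (abs_add_le _ _).trans (add_le_add haarg hbarg)
    obtain ⟨hab1, hab2⟩ := abs_le.mp habs
    have key2 : a * b = Complex.exp (((a.arg + b.arg : ℝ) : ℂ) * Complex.I) := by
      conv_lhs => rw [hae, hbe]
      rw [← Complex.exp_add]
      congr 1
      push_cast
      ring
    have key : Complex.exp (φ * Complex.I) =
        Complex.exp (((a.arg + b.arg : ℝ) : ℂ) * Complex.I) := hab.trans key2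
    obtain ⟨q, hq⟩ := Complex.exp_eq_exp_iff_exists_int.mp key
    have hreal : φ = (a.arg + b.arg) + q * (2 * Real.pi) := by
      have him := congrArg Complex.im hq
      simpa [Complex.add_im, Complex.mul_im, Complex.mul_re, mul_comm] using him
    have hq0 : q = 0 := by
      have hlt1 : (-1 : ℝ) < (q : ℝ) := by nlinarith
      have hlt2 : ((q : ℝ)) < 1 := by nlinarith
      have h1 : (-1 : ℤ) < q := by exact_mod_cast hlt1
      have h2 : q < 1 := by exact_mod_cast hlt2
      omega
    rw [hq0] at hreal
    push_cast at hreal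
    have hargs1 : a.arg ≤ θ₁ := (abs_le.mp haarg).2
    have hargs2 : b.arg ≤ θ₂ := (abs_le.mp hbarg).2
    linarith
end

section
/- Let K_1, K_2 be unitary operators with spectra closed under conjugation and θ_p = max{φ ∈ [0,π] : e^{iφ} ∈ spec(K_p)}. If θ_1 < π/2, θ_2 < π/2, and θ_1 + θ_2 ≥ π/2, then K_1 ⊗ K_2 has an eigenvalue e^{iφ} with φ ∈ [π/2, π), and hence ‖K_1 ⊗ K_2 − I‖ ≥ √2. -/
open scoped Matrix.Norms.L2Operator Kronecker Pointwise

lemma exists_eigvec_of_mem_spectrum {n : ℕ} {A : Matrix (Fin n) (Fin n) ℂ} {a : ℂ}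
    (ha : a ∈ spectrum ℂ A) : ∃ v : Fin n → ℂ, v ≠ 0 ∧ A.mulVec v = a • v := by
  rw [spectrum.mem_iff, Matrix.isUnit_iff_isUnit_det, isUnit_iff_ne_zero, not_not,
    ← Matrix.exists_mulVec_eq_zero_iff] at ha
  obtain ⟨v, hv, hav⟩ := ha
  refine ⟨v, hv, ?_⟩
  have : (algebraMap ℂ (Matrix (Fin n) (Fin n) ℂ) a).mulVec v - A.mulVec v = 0 := by
    rw [← Matrix.sub_mulVec, hav]
  rw [sub_eq_zero] at this
  rw [← this]
  funext p
  simp [Matrix.algebraMap_eq_diagonal, Matrix.mulVec_diagonal]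

lemma kron_mem_spectrum {n m : ℕ} (A : Matrix (Fin n) (Fin n) ℂ) (B : Matrix (Fin m) (Fin m) ℂ)
    {a b : ℂ} (ha : a ∈ spectrum ℂ A) (hb : b ∈ spectrum ℂ B) :
    a * b ∈ spectrum ℂ (A ⊗ₖ B) := by
  obtain ⟨v, hv, hav⟩ := exists_eigvec_of_mem_spectrum ha
  obtain ⟨w, hw, hbw⟩ := exists_eigvec_of_mem_spectrum hb
  rw [spectrum.mem_iff, Matrix.isUnit_iff_isUnit_det, isUnit_iff_ne_zero, not_not,
    ← Matrix.exists_mulVec_eq_zero_iff]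
  obtain ⟨i, hi⟩ := Function.ne_iff.mp hv
  obtain ⟨j, hj⟩ := Function.ne_iff.mp hw
  refine ⟨fun p => v p.1 * w p.2, ?_, ?_⟩
  · intro h
    have := congrFun h (i, j)
    simp only [Pi.zero_apply] at this hi hj
    exact (mul_ne_zero hi hj) this
  · have key : (A ⊗ₖ B).mulVec (fun p => v p.1 * w p.2) = (a * b) • (fun p => v p.1 * w p.2) := by
      funext p
      have h1 := congrFun hav p.1
      have h2 := congrFun hbw p.2
      simp only [Matrix.mulVec, dotProduct, Pi.smul_apply, smul_eq_mul] at h1 h2 ⊢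
      calc ∑ q : Fin n × Fin m, (A ⊗ₖ B) p q * (v q.1 * w q.2)
          = ∑ k : Fin n, ∑ l : Fin m, (A p.1 k * v k) * (B p.2 l * w l) := by
            rw [Fintype.sum_prod_type]
            congr 1; funext k; congr 1; funext l
            simp [Matrix.kroneckerMap_apply]; ring
        _ = (∑ k : Fin n, A p.1 k * v k) * (∑ l : Fin m, B p.2 l * w l) := by
            rw [Finset.sum_mul_sum]
        _ = (a * b) * (v p.1 * w p.2) := by rw [h1, h2]; ring
    rw [Matrix.sub_mulVec, key]
    have : (algebraMap ℂ (Matrix (Fin n × Fin m) (Fin n × Fin m) ℂ) (a * b)).mulVec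
        (fun p => v p.1 * w p.2) = (a * b) • (fun p => v p.1 * w p.2) := by
      funext p
      simp [Matrix.algebraMap_eq_diagonal, Matrix.mulVec_diagonal]
    rw [this, sub_self]

/-- Additivity lemma, case (b): if `K₁, K₂` are unitaries with conjugation-closed spectra,
maximal angles `θ₁, θ₂ < π/2` and `θ₁ + θ₂ ≥ π/2`, then `K₁ ⊗ K₂` has an eigenvalue
`e^{iφ}` with `φ ∈ [π/2, π)`, and hence `‖K₁ ⊗ K₂ − I‖ ≥ √2`. -/
theorem stmt_12 (n m : ℕ) (hn : 0 < n) (hm : 0 < m)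
    (K₁ : Matrix (Fin n) (Fin n) ℂ) (K₂ : Matrix (Fin m) (Fin m) ℂ)
    (hK₁ : K₁ ∈ Matrix.unitaryGroup (Fin n) ℂ)
    (hK₂ : K₂ ∈ Matrix.unitaryGroup (Fin m) ℂ)
    (hconj₁ : ∀ z ∈ spectrum ℂ K₁, (starRingEnd ℂ) z ∈ spectrum ℂ K₁)
    (hconj₂ : ∀ z ∈ spectrum ℂ K₂, (starRingEnd ℂ) z ∈ spectrum ℂ K₂)
    (θ₁ θ₂ : ℝ)
    (hθ₁ : IsGreatest {φ : ℝ | φ ∈ Set.Icc 0 Real.pi ∧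
        Complex.exp (φ * Complex.I) ∈ spectrum ℂ K₁} θ₁)
    (hθ₂ : IsGreatest {φ : ℝ | φ ∈ Set.Icc 0 Real.pi ∧
        Complex.exp (φ * Complex.I) ∈ spectrum ℂ K₂} θ₂)
    (h₁ : θ₁ < Real.pi / 2) (h₂ : θ₂ < Real.pi / 2)
    (hsum : Real.pi / 2 ≤ θ₁ + θ₂) :
    (∃ φ ∈ Set.Ico (Real.pi / 2) Real.pi,
        Complex.exp (φ * Complex.I) ∈ spectrum ℂ (K₁ ⊗ₖ K₂)) ∧
      Real.sqrt 2 ≤ ‖K₁ ⊗ₖ K₂ - 1‖ := by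
  obtain ⟨⟨_, hspec₁⟩, _⟩ := hθ₁
  obtain ⟨⟨_, hspec₂⟩, _⟩ := hθ₂
  set φ := θ₁ + θ₂ with hφ
  have hφmem : φ ∈ Set.Ico (Real.pi / 2) Real.pi := ⟨hsum, by linarith⟩
  have hφspec : Complex.exp (φ * Complex.I) ∈ spectrum ℂ (K₁ ⊗ₖ K₂) := by
    have := kron_mem_spectrum K₁ K₂ hspec₁ hspec₂
    rwa [← Complex.exp_add, ← add_mul, ← Complex.ofReal_add] at this
  refine ⟨⟨φ, hφmem, hφspec⟩, ?_⟩
  -- norm bound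
  set M := K₁ ⊗ₖ K₂
  set z := Complex.exp (φ * Complex.I)
  have hsub : z - 1 ∈ spectrum ℂ (M - 1) := by
    have : z - 1 ∈ spectrum ℂ M - {(1 : ℂ)} := Set.sub_mem_sub hφspec rfl
    rwa [spectrum.sub_singleton_eq, map_one] at this
  have hone : ‖(1 : Matrix (Fin n × Fin m) (Fin n × Fin m) ℂ)‖ = 1 := by
    haveI : Nonempty (Fin n × Fin m) := ⟨⟨⟨0, hn⟩, ⟨0, hm⟩⟩⟩
    rw [Matrix.cstar_norm_def, map_one]
    exact norm_one
  have hle : ‖z - 1‖ ≤ ‖M - 1‖ := by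
    have := spectrum.norm_le_norm_mul_of_mem hsub
    rwa [hone, mul_one] at this
  refine le_trans ?_ hle
  have hcos : Real.cos φ ≤ 0 :=
    Real.cos_nonpos_of_pi_div_two_le_of_le hφmem.1 (by linarith [hφmem.2])
  have hsq : ‖z - 1‖ ^ 2 = 2 - 2 * Real.cos φ := by
    rw [Complex.sq_norm, Complex.normSq_apply]
    simp only [Complex.sub_re, Complex.sub_im, Complex.one_re, Complex.one_im, z,
      Complex.exp_ofReal_mul_I_re, Complex.exp_ofReal_mul_I_im]
    nlinarith [Real.sin_sq_add_cos_sq φ]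
  have h2 : (2 : ℝ) ≤ ‖z - 1‖ ^ 2 := by rw [hsq]; linarith
  have := Real.sqrt_le_sqrt h2
  rwa [Real.sqrt_sq (norm_nonneg _)] at this
end

section
/- Let K_1,...,K_ℓ be unitary operators on pairwise distinct tensor factors, each with spectrum closed under complex conjugation, and θ_p = max{φ ∈ [0,π] : e^{iφ} ∈ spec(K_p)} with each θ_p < π/2. If φ := Σ_p θ_p < π/2, then ‖K_1 ⊗ ⋯ ⊗ K_ℓ − I‖ = |e^{iφ} − 1|. -/
open scoped Matrix.Norms.L2Operator

set_option maxHeartbeats 1000000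

namespace Stmt13

variable {ℓ n : ℕ}

/-- The tensor-product matrix. -/
def T (M : Fin ℓ → Matrix (Fin n) (Fin n) ℂ) :
    Matrix (Fin ℓ → Fin n) (Fin ℓ → Fin n) ℂ :=
  Matrix.of fun x y => ∏ p, M p (x p) (y p)

lemma T_apply (M : Fin ℓ → Matrix (Fin n) (Fin n) ℂ) (x y : Fin ℓ → Fin n) :
    T M x y = ∏ p, M p (x p) (y p) := rfl

lemma T_one : T (1 : Fin ℓ → Matrix (Fin n) (Fin n) ℂ) = 1 := by
  ext x y
  simp only [T_apply, Pi.one_apply]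
  by_cases h : x = y
  · subst h; simp [Matrix.one_apply]
  · obtain ⟨q, hq⟩ := Function.ne_iff.mp h
    rw [Matrix.one_apply_ne h]
    exact Finset.prod_eq_zero (Finset.mem_univ q) (Matrix.one_apply_ne hq)

lemma T_mul (M N : Fin ℓ → Matrix (Fin n) (Fin n) ℂ) : T M * T N = T (M * N) := by
  ext x y
  simp only [Matrix.mul_apply, T_apply, Pi.mul_apply]
  calc ∑ z : Fin ℓ → Fin n, (∏ p, M p (x p) (z p)) * ∏ p, N p (z p) (y p)
      = ∑ z : Fin ℓ → Fin n, ∏ p, M p (x p) (z p) * N p (z p) (y p) := by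
        simp_rw [Finset.prod_mul_distrib]
    _ = ∏ p, ∑ j, M p (x p) j * N p j (y p) := by
        rw [Finset.prod_univ_sum]
        simp

lemma T_star (M : Fin ℓ → Matrix (Fin n) (Fin n) ℂ) : star (T M) = T (star M) := by
  ext x y
  simp only [Matrix.star_apply, T_apply, Pi.star_apply, star_prod]

/-- `T` as a monoid hom. -/
def Tmon : (Fin ℓ → Matrix (Fin n) (Fin n) ℂ) →* Matrix (Fin ℓ → Fin n) (Fin ℓ → Fin n) ℂ where
  toFun := T
  map_one' := T_one
  map_mul' M N := (T_mul M N).symm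

lemma T_single_apply (p : Fin ℓ) (M : Matrix (Fin n) (Fin n) ℂ) (x y : Fin ℓ → Fin n) :
    T (Pi.mulSingle p M) x y
      = M (x p) (y p) * ∏ q ∈ Finset.univ.erase p, (1 : Matrix (Fin n) (Fin n) ℂ) (x q) (y q) := by
  rw [T_apply, ← Finset.mul_prod_erase _ _ (Finset.mem_univ p), Pi.mulSingle_eq_same]
  congr 1
  refine Finset.prod_congr rfl fun q hq => ?_
  rw [Pi.mulSingle_eq_of_ne (Finset.ne_of_mem_erase hq)]

/-- Embedding of the `p`-th factor, as an algebra hom. -/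
noncomputable def TpA (p : Fin ℓ) :
    Matrix (Fin n) (Fin n) ℂ →ₐ[ℂ] Matrix (Fin ℓ → Fin n) (Fin ℓ → Fin n) ℂ where
  toFun M := T (Pi.mulSingle p M)
  map_one' := by
    show T (Pi.mulSingle p 1) = 1
    rw [Pi.mulSingle_one, T_one]
  map_mul' M N := by
    show T (Pi.mulSingle p (M * N)) = T (Pi.mulSingle p M) * T (Pi.mulSingle p N)
    rw [Pi.mulSingle_mul, ← T_mul]
  map_zero' := by
    ext x y
    simp [T_single_apply]
  map_add' M N := by
    ext x y
    simp [T_single_apply, add_mul]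
  commutes' r := by
    have h1 : ∀ (M : Matrix (Fin n) (Fin n) ℂ) (r : ℂ),
        T (Pi.mulSingle p (r • M)) = r • T (Pi.mulSingle p M) := by
      intro M r
      ext x y
      simp [T_single_apply, Matrix.smul_apply, mul_assoc, smul_eq_mul]
    show T (Pi.mulSingle p ((algebraMap ℂ _) r)) = (algebraMap ℂ _) r
    rw [Algebra.algebraMap_eq_smul_one, Algebra.algebraMap_eq_smul_one, h1,
      Pi.mulSingle_one, T_one]

lemma TpA_apply (p : Fin ℓ) (M : Matrix (Fin n) (Fin n) ℂ) :
    TpA p M = T (Pi.mulSingle p M) := rfl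

lemma star_TpA (p : Fin ℓ) (M : Matrix (Fin n) (Fin n) ℂ) :
    star (TpA p M) = TpA p (star M) := by
  have hs : star (Pi.mulSingle p M : Fin ℓ → Matrix (Fin n) (Fin n) ℂ) = Pi.mulSingle p (star M) := by
    funext q
    by_cases h : q = p
    · subst h; simp
    · simp [Pi.mulSingle_eq_of_ne h, Pi.star_apply]
  rw [TpA_apply, TpA_apply, T_star, hs]

section Vec
variable {m : Type*} [Fintype m] [DecidableEq m]

lemma mem_spectrum_of_mulVec (M : Matrix m m ℂ) {z : ℂ} {v : m → ℂ}
    (hv : v ≠ 0) (hMv : M.mulVec v = z • v) : z ∈ spectrum ℂ M := by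
  rw [spectrum.mem_iff]
  intro hunit
  rw [Matrix.isUnit_iff_isUnit_det, isUnit_iff_ne_zero] at hunit
  apply hunit
  rw [← Matrix.exists_mulVec_eq_zero_iff]
  refine ⟨v, hv, ?_⟩
  rw [Matrix.sub_mulVec, hMv, Algebra.algebraMap_eq_smul_one, Matrix.smul_mulVec,
    Matrix.one_mulVec, sub_self]

lemma exists_mulVec_of_mem_spectrum {M : Matrix m m ℂ} {z : ℂ} (hz : z ∈ spectrum ℂ M) :
    ∃ v, v ≠ 0 ∧ M.mulVec v = z • v := by
  rw [spectrum.mem_iff] at hz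
  have hdet : (algebraMap ℂ (Matrix m m ℂ) z - M).det = 0 := by
    by_contra h
    exact hz ((Matrix.isUnit_iff_isUnit_det _).mpr (isUnit_iff_ne_zero.mpr h))
  obtain ⟨v, hv, hv0⟩ := Matrix.exists_mulVec_eq_zero_iff.mpr hdet
  refine ⟨v, hv, ?_⟩
  rw [Matrix.sub_mulVec, Algebra.algebraMap_eq_smul_one, Matrix.smul_mulVec,
    Matrix.one_mulVec, sub_eq_zero] at hv0
  exact hv0.symm
end Vec

variable {ℓ n : ℕ}

lemma T_mulVec (M : Fin ℓ → Matrix (Fin n) (Fin n) ℂ) (v : Fin ℓ → Fin n → ℂ)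
    (x : Fin ℓ → Fin n) :
    (T M).mulVec (fun y => ∏ p, v p (y p)) x = ∏ p, (M p).mulVec (v p) (x p) := by
  simp only [Matrix.mulVec, dotProduct, T_apply]
  calc ∑ y : Fin ℓ → Fin n, (∏ p, M p (x p) (y p)) * ∏ p, v p (y p)
      = ∑ y : Fin ℓ → Fin n, ∏ p, M p (x p) (y p) * v p (y p) := by
        simp_rw [Finset.prod_mul_distrib]
    _ = ∏ p, ∑ j, M p (x p) j * v p j := by rw [Finset.prod_univ_sum]; simp

lemma prod_mem_spectrum_T (M : Fin ℓ → Matrix (Fin n) (Fin n) ℂ) (z : Fin ℓ → ℂ)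
    (hz : ∀ p, z p ∈ spectrum ℂ (M p)) : (∏ p, z p) ∈ spectrum ℂ (T M) := by
  choose v hv hMv using fun p => exists_mulVec_of_mem_spectrum (hz p)
  apply mem_spectrum_of_mulVec (T M) (v := fun y => ∏ p, v p (y p))
  · choose j hj using fun p => Function.ne_iff.mp (hv p)
    intro h0
    have h1 := congrFun h0 j
    simp only [Pi.zero_apply] at h1
    refine Finset.prod_ne_zero_iff.mpr (fun p _ => ?_) h1
    simpa using hj p
  · funext x
    rw [T_mulVec]
    simp only [hMv, Pi.smul_apply, smul_eq_mul]
    rw [Finset.prod_mul_distrib]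

lemma norm_exp_mul_I_sub_one (a : ℝ) :
    ‖Complex.exp (a * Complex.I) - 1‖ = Real.sqrt (2 - 2 * Real.cos a) := by
  rw [Complex.norm_def, Complex.normSq_apply]
  congr 1
  simp only [Complex.sub_re, Complex.sub_im, Complex.exp_ofReal_mul_I_re,
    Complex.exp_ofReal_mul_I_im, Complex.one_re, Complex.one_im]
  have := Real.sin_sq_add_cos_sq a
  nlinarith [this]

lemma norm_exp_mono {a b : ℝ} (h1 : |a| ≤ b) (h2 : b ≤ Real.pi) :
    ‖Complex.exp (a * Complex.I) - 1‖ ≤ ‖Complex.exp (b * Complex.I) - 1‖ := by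
  rw [norm_exp_mul_I_sub_one, norm_exp_mul_I_sub_one]
  apply Real.sqrt_le_sqrt
  have hc : Real.cos b ≤ Real.cos a := by
    have h3 : Real.cos b ≤ Real.cos |a| :=
      Real.cos_le_cos_of_nonneg_of_le_pi (abs_nonneg a) h2 h1
    rwa [Real.cos_abs] at h3
  linarith

lemma exists_angle {n : ℕ} {N : Matrix (Fin n) (Fin n) ℂ}
    (hN : N ∈ Matrix.unitaryGroup (Fin n) ℂ)
    (hconj : ∀ w ∈ spectrum ℂ N, (starRingEnd ℂ) w ∈ spectrum ℂ N)
    {θ₀ : ℝ}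
    (hθ : IsGreatest {φ : ℝ | φ ∈ Set.Icc 0 Real.pi ∧
      Complex.exp (φ * Complex.I) ∈ spectrum ℂ N} θ₀)
    {z : ℂ} (hz : z ∈ spectrum ℂ N) :
    ∃ ψ : ℝ, |ψ| ≤ θ₀ ∧ Complex.exp (ψ * Complex.I) = z := by
  have habs : ‖z‖ = 1 := by
    have h := spectrum.subset_circle_of_unitary hN hz
    rwa [Metric.mem_sphere, dist_zero_right] at h
  have hz1 : Complex.exp ((z.arg : ℝ) * Complex.I) = z := by
    conv_rhs => rw [← Complex.norm_mul_exp_arg_mul_I z]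
    rw [habs, Complex.ofReal_one, one_mul]
  rcases le_or_gt 0 z.arg with h0 | h0
  · refine ⟨z.arg, ?_, hz1⟩
    rw [abs_of_nonneg h0]
    exact hθ.2 ⟨⟨h0, Complex.arg_le_pi z⟩, by rw [hz1]; exact hz⟩
  · have hargc : ((starRingEnd ℂ) z).arg = -z.arg := by
      rw [Complex.arg_conj, if_neg]
      intro h
      rw [h] at h0
      exact absurd h0 (not_lt.mpr Real.pi_pos.le)
    have hcz : Complex.exp ((-z.arg : ℝ) * Complex.I) = (starRingEnd ℂ) z := by
      conv_rhs => rw [← Complex.norm_mul_exp_arg_mul_I ((starRingEnd ℂ) z)]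
      rw [Complex.norm_conj, habs, Complex.ofReal_one, one_mul, hargc, Complex.ofReal_neg]
    refine ⟨z.arg, ?_, hz1⟩
    rw [abs_of_neg h0]
    refine hθ.2 ⟨⟨by linarith, ?_⟩, by rw [hcz]; exact hconj z hz⟩
    have := Complex.neg_pi_lt_arg z
    linarith

lemma spectrum_T_subset
    (Tmon : (Fin ℓ → Matrix (Fin n) (Fin n) ℂ) →* Matrix (Fin ℓ → Fin n) (Fin ℓ → Fin n) ℂ)
    (hTmon : ∀ M, Tmon M = T M)
    (TpA : Fin ℓ → (Matrix (Fin n) (Fin n) ℂ →ₐ[ℂ] Matrix (Fin ℓ → Fin n) (Fin ℓ → Fin n) ℂ))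
    (hTpA : ∀ p M, TpA p M = T (Pi.mulSingle p M))
    (star_TpA : ∀ p M, star (TpA p M) = TpA p (star M))
    (K : Fin ℓ → Matrix (Fin n) (Fin n) ℂ)
    (hK : ∀ p, K p ∈ Matrix.unitaryGroup (Fin n) ℂ) :
    spectrum ℂ (T K) ⊆
      {z | ∃ c : Fin ℓ → ℂ, (∀ p, c p ∈ spectrum ℂ (K p)) ∧ ∏ p, c p = z} := by
  classical
  intro z hz
  letI : CStarAlgebra (Matrix (Fin ℓ → Fin n) (Fin ℓ → Fin n) ℂ) := { }
  set g : Fin ℓ → Matrix (Fin ℓ → Fin n) (Fin ℓ → Fin n) ℂ := fun p => TpA p (K p) with hg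
  have hgT : ∀ p, g p = Tmon (Pi.mulSingle p (K p)) := fun p =>
    (hTpA p (K p)).trans (hTmon (Pi.mulSingle p (K p))).symm
  have hcomm : ∀ a ∈ Set.range g, ∀ b ∈ Set.range g, a * b = b * a := by
    rintro _ ⟨p, rfl⟩ _ ⟨q, rfl⟩
    by_cases h : p = q
    · subst h; rfl
    · rw [hgT p, hgT q]
      exact (Pi.mulSingle_commute h (K p) (K q)).map Tmon
  have hcomm_star : ∀ a ∈ Set.range g, ∀ b ∈ Set.range g, a * star b = star b * a := by
    rintro _ ⟨p, rfl⟩ _ ⟨q, rfl⟩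
    rw [star_TpA]
    by_cases h : p = q
    · subst h
      rw [hg, ← map_mul, ← map_mul, (Unitary.mem_iff.mp (hK p)).2,
        (Unitary.mem_iff.mp (hK p)).1]
    · rw [hgT p, hTpA q, ← hTmon]
      exact (Pi.mulSingle_commute h (K p) (star (K q))).map Tmon
  set S := StarAlgebra.adjoin ℂ (Set.range g) with hS
  letI : CommRing S := StarAlgebra.adjoinCommRingOfComm ℂ hcomm hcomm_star
  letI : NormedCommRing S := { (inferInstance : NormedRing S) with mul_comm := mul_comm }
  haveI hclosed : IsClosed (S : Set (Matrix (Fin ℓ → Fin n) (Fin ℓ → Fin n) ℂ)) :=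
    S.toSubalgebra.toSubmodule.closed_of_finiteDimensional
  haveI : CompleteSpace S := hclosed.completeSpace_coe
  set u : Fin ℓ → S := fun p =>
    ⟨g p, StarAlgebra.subset_adjoin ℂ _ (Set.mem_range_self p)⟩ with hu
  have hcoe : ((∏ p, u p : S) : Matrix (Fin ℓ → Fin n) (Fin ℓ → Fin n) ℂ) = T K := by
    have h1 : (∏ p, u p : S) = Finset.univ.noncommProd u _ :=
      (Finset.noncommProd_eq_prod _ _).symm
    rw [h1]
    show S.subtype (Finset.univ.noncommProd u _) = T K
    erw [Finset.map_noncommProd _ _ _ S.subtype]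
    have h2 : ∀ p ∈ Finset.univ, S.subtype (u p) = Tmon (Pi.mulSingle p (K p)) :=
      fun p _ => hgT p
    erw [Finset.noncommProd_congr rfl h2, ← Finset.map_noncommProd,
      Finset.noncommProd_mulSingle, hTmon]
    exact fun i _ j _ _ => Pi.mulSingle_apply_commute K i j
  have hzS : z ∈ spectrum ℂ (∏ p, u p : S) := by
    rw [StarSubalgebra.spectrum_eq S, hcoe]
    exact hz
  obtain ⟨f, hf⟩ := WeakDual.CharacterSpace.mem_spectrum_iff_exists.mp hzS
  refine ⟨fun p => f (u p), fun p => ?_, ?_⟩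
  · have h1 : f (u p) ∈ spectrum ℂ (u p) := AlgHom.apply_mem_spectrum f (u p)
    rw [StarSubalgebra.spectrum_eq S] at h1
    exact AlgHom.spectrum_apply_subset (TpA p) (K p) h1
  · rw [← hf, map_prod]

end Stmt13

/-- If `K 1, ..., K ℓ` are unitaries on distinct tensor factors, each with
conjugation-closed spectrum and maximal angle `θ p < π/2`, and `φ = Σ_p θ p < π/2`,
then `‖K 1 ⊗ ⋯ ⊗ K ℓ − I‖ = |e^{iφ} − 1|`. Here the tensor product is realized as
the matrix with entries `∏ p, K p (x p) (y p)`. -/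
theorem stmt_13 (ℓ n : ℕ) (hn : 0 < n) (K : Fin ℓ → Matrix (Fin n) (Fin n) ℂ)
    (hK : ∀ p, K p ∈ Matrix.unitaryGroup (Fin n) ℂ)
    (hconj : ∀ p, ∀ z ∈ spectrum ℂ (K p), (starRingEnd ℂ) z ∈ spectrum ℂ (K p))
    (θ : Fin ℓ → ℝ)
    (hθ : ∀ p, IsGreatest {φ : ℝ | φ ∈ Set.Icc 0 Real.pi ∧
        Complex.exp (φ * Complex.I) ∈ spectrum ℂ (K p)} (θ p))
    (hθlt : ∀ p, θ p < Real.pi / 2)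
    (hsum : ∑ p, θ p < Real.pi / 2) :
    ‖(Matrix.of fun x y : Fin ℓ → Fin n => ∏ p, K p (x p) (y p)) - 1‖ =
      ‖Complex.exp ((∑ p, θ p) * Complex.I) - 1‖ := by
  classical
  haveI : Nonempty (Fin n) := ⟨⟨0, hn⟩⟩
  set φ := ∑ p, θ p with hφ
  have hφπ : φ ≤ Real.pi := by
    have := Real.pi_pos
    linarith [hsum]
  -- the tensor matrix
  have hLHS : (Matrix.of fun x y : Fin ℓ → Fin n => ∏ p, K p (x p) (y p))
      = Stmt13.T K := rfl
  rw [hLHS]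
  -- unitarity of T K
  have h1 : star (Stmt13.T K) * Stmt13.T K = 1 := by
    rw [Stmt13.T_star, Stmt13.T_mul]
    have : star K * K = 1 := by
      funext p
      exact (Unitary.mem_iff.mp (hK p)).1
    rw [this, Stmt13.T_one]
  have h2 : Stmt13.T K * star (Stmt13.T K) = 1 := by
    rw [Stmt13.T_star, Stmt13.T_mul]
    have : K * star K = 1 := by
      funext p
      exact (Unitary.mem_iff.mp (hK p)).2
    rw [this, Stmt13.T_one]
  -- star-normality of T K - 1
  haveI hsn : IsStarNormal (Stmt13.T K - 1) := by
    constructor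
    show star (Stmt13.T K - 1) * (Stmt13.T K - 1) = (Stmt13.T K - 1) * star (Stmt13.T K - 1)
    simp only [star_sub, star_one, mul_sub, sub_mul, mul_one, one_mul, h1, h2]
    abel
  -- spectrum shift
  have hshift : ∀ w : ℂ, w ∈ spectrum ℂ (Stmt13.T K - 1) ↔ w + 1 ∈ spectrum ℂ (Stmt13.T K) := by
    intro w
    have heq : algebraMap ℂ _ (w + 1) - Stmt13.T K = algebraMap ℂ _ w - (Stmt13.T K - 1) := by
      rw [map_add, map_one]
      abel
    simp only [spectrum.mem_iff, heq]
  -- lower bound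
  have hmax : Complex.exp ((φ : ℂ) * Complex.I) ∈ spectrum ℂ (Stmt13.T K) := by
    have hmem := Stmt13.prod_mem_spectrum_T K (fun p => Complex.exp ((θ p : ℂ) * Complex.I))
      (fun p => (hθ p).1.2)
    have : (∏ p, Complex.exp ((θ p : ℂ) * Complex.I)) = Complex.exp ((φ : ℂ) * Complex.I) := by
      rw [← Complex.exp_sum, ← Finset.sum_mul, hφ]
      push_cast
      ring_nf
    rwa [this] at hmem
  have hlow : ‖Complex.exp ((φ : ℂ) * Complex.I) - 1‖ ≤ ‖Stmt13.T K - 1‖ := by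
    apply spectrum.norm_le_norm_of_mem (𝕜 := ℂ)
    rw [hshift]
    rwa [sub_add_cancel]
  -- upper bound on spectral elements
  have hup : ∀ w ∈ spectrum ℂ (Stmt13.T K - 1), ‖w‖ ≤ ‖Complex.exp ((φ : ℂ) * Complex.I) - 1‖ := by
    intro w hw
    obtain ⟨c, hc, hcprod⟩ := Stmt13.spectrum_T_subset Stmt13.Tmon (fun _ => rfl)
      Stmt13.TpA (fun _ _ => rfl) Stmt13.star_TpA K hK ((hshift w).mp hw)
    choose ψ hψ hψe using fun p => Stmt13.exists_angle (hK p) (hconj p) (hθ p) (hc p)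
    have hw' : w = Complex.exp (((∑ p, ψ p : ℝ) : ℂ) * Complex.I) - 1 := by
      rw [Complex.ofReal_sum, Finset.sum_mul, Complex.exp_sum]
      simp_rw [hψe]
      rw [hcprod]
      ring
    rw [hw']
    apply Stmt13.norm_exp_mono _ hφπ
    calc |∑ p, ψ p| ≤ ∑ p, |ψ p| := Finset.abs_sum_le_sum_abs _ _
      _ ≤ ∑ p, θ p := Finset.sum_le_sum fun p _ => hψ p
  -- conclude via spectral radius
  letI : CStarAlgebra (Matrix (Fin ℓ → Fin n) (Fin ℓ → Fin n) ℂ) := { }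
  have hradius : spectralRadius ℂ (Stmt13.T K - 1) = (‖Stmt13.T K - 1‖₊ : ENNReal) :=
    IsStarNormal.spectralRadius_eq_nnnorm (Stmt13.T K - 1)
  have hrle : spectralRadius ℂ (Stmt13.T K - 1)
      ≤ (‖Complex.exp ((φ : ℂ) * Complex.I) - 1‖₊ : ENNReal) := by
    rw [spectralRadius]
    refine iSup₂_le fun w hw => ?_
    refine ENNReal.coe_le_coe.mpr ?_
    rw [← NNReal.coe_le_coe]
    simpa using hup w hw
  rw [hradius] at hrle
  have hupnorm : ‖Stmt13.T K - 1‖ ≤ ‖Complex.exp ((φ : ℂ) * Complex.I) - 1‖ := by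
    have := ENNReal.coe_le_coe.mp hrle
    rw [← NNReal.coe_le_coe] at this
    simpa using this
  exact le_antisymm hupnorm hlow
end
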